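/- arXiv:1106.4100 — 2 statements merged into one kernel-verified Lean document; each statement's English description precedes it below -/
import Mathlib

section
/- Context preservation, part 2: if ∀q, g ∩ S(q) ⊆ S(g ∩ q), then {g};S* = {g};S*;{g}, i.e. for all q, g ∩ S*(q) = g ∩ S*(g ∩ q). -/
def IsWeakIter {α : Type*} (S W : Set α → Set α) : Prop :=
  ∀ q : Set α, IsGreatest (Function.fixedPoints fun X => S X ∩ q) (W q)

theorem aux_le_W {α : Type*} (S W : Set α → Set α)
    (hS : Monotone S) (hW : IsWeakIter S W) (q X : Set α)
    (hX : X ⊆ S X ∩ q) : X ⊆ W q := by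
  set F : Set α →o Set α :=
    ⟨fun X => S X ∩ q, fun a b hab => Set.inter_subset_inter_left q (hS hab)⟩
  have h1 : X ≤ OrderHom.gfp F := OrderHom.le_gfp F hX
  have h2 : OrderHom.gfp F ⊆ W q := (hW q).2 (OrderHom.isFixedPt_gfp F)
  exact h1.trans h2

theorem context_preservation_2 {α : Type*} (S W : Set α → Set α) (g : Set α)
    (hS : Monotone S) (hW : IsWeakIter S W)
    (hcomm : ∀ q : Set α, g ∩ S q ⊆ S (g ∩ q)) :
    ∀ q : Set α, g ∩ W q = g ∩ W (g ∩ q) := by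
  intro q
  have hfix : W q = S (W q) ∩ q := ((hW q).1).symm
  have hfix2 : W (g ∩ q) = S (W (g ∩ q)) ∩ (g ∩ q) := ((hW (g ∩ q)).1).symm
  apply Set.Subset.antisymm
  · have h1 : g ∩ W q ⊆ S (g ∩ W q) ∩ (g ∩ q) := by
      intro x hx
      have hx' : x ∈ g ∩ (S (W q) ∩ q) := ⟨hx.1, hfix ▸ hx.2⟩
      refine ⟨hcomm (W q) ⟨hx.1, hx'.2.1⟩, hx.1, hx'.2.2⟩
    have := aux_le_W S W hS hW (g ∩ q) (g ∩ W q) h1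
    exact fun x hx => ⟨hx.1, this hx⟩
  · have h2 : W (g ∩ q) ⊆ S (W (g ∩ q)) ∩ q := by
      intro x hx
      have := hfix2 ▸ hx
      exact ⟨this.1, this.2.2⟩
    have := aux_le_W S W hS hW q _ h2
    exact fun x hx => ⟨hx.1, this hx.2⟩
end

section
/- Context preservation, part 3: if ∀q, g ∩ S(q) ⊆ S(g ∩ q), then {g};S* = ({g};S)*, i.e. for all q, g ∩ S*(q) = ({g};S)*(q), where ({g};S)(q) = g ∩ S(q). -/
/-- Any postfixed point of a monotone map is below the greatest fixed point. -/
lemma postfixed_le_gfp {α : Type*} {F : Set α → Set α} (hF : Monotone F) {Wq : Set α}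
    (hW : IsGreatest (Function.fixedPoints F) Wq) {X : Set α} (hX : X ⊆ F X) : X ⊆ Wq := by
  have hPpost : (⋃₀ {Y : Set α | Y ⊆ F Y}) ⊆ F (⋃₀ {Y : Set α | Y ⊆ F Y}) := by
    intro y hy
    obtain ⟨Y, hY, hyY⟩ := hy
    exact hF (Set.subset_sUnion_of_mem hY) (hY hyY)
  have hFP : F (⋃₀ {Y : Set α | Y ⊆ F Y}) ⊆ (⋃₀ {Y : Set α | Y ⊆ F Y}) :=
    Set.subset_sUnion_of_mem (hF hPpost)
  have hfix : (⋃₀ {Y : Set α | Y ⊆ F Y}) ∈ Function.fixedPoints F := subset_antisymm hFP hPpost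
  have hXP : X ⊆ ⋃₀ {Y : Set α | Y ⊆ F Y} := Set.subset_sUnion_of_mem hX
  exact hXP.trans (hW.2 hfix)

theorem context_preservation_3 {α : Type*} (S W WG : Set α → Set α) (g : Set α)
    (hS : Monotone S) (hW : IsWeakIter S W)
    (hWG : IsWeakIter (fun X => g ∩ S X) WG)
    (hcomm : ∀ q : Set α, g ∩ S q ⊆ S (g ∩ q)) :
    ∀ q : Set α, g ∩ W q = WG q := by
  intro q
  have hWfix : S (W q) ∩ q = W q := (hW q).1
  have hWGfix : g ∩ S (WG q) ∩ q = WG q := (hWG q).1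
  apply subset_antisymm
  · -- g ∩ W q is a fixed point of X ↦ (g ∩ S X) ∩ q
    apply (hWG q).2
    show g ∩ S (g ∩ W q) ∩ q = g ∩ W q
    apply subset_antisymm
    · rintro x ⟨⟨hg, hs⟩, hq⟩
      exact ⟨hg, hWfix ▸ (⟨hS Set.inter_subset_right hs, hq⟩ : x ∈ S (W q) ∩ q)⟩
    · rintro x ⟨hg, hw⟩
      have hx2 : x ∈ S (W q) ∩ q := hWfix.symm ▸ hw
      exact ⟨⟨hg, hcomm (W q) ⟨hg, hx2.1⟩⟩, hx2.2⟩
  · intro x hx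
    have hx' : x ∈ g ∩ S (WG q) ∩ q := hWGfix.symm ▸ hx
    have hFmono : Monotone fun X : Set α => S X ∩ q := fun A B h =>
      Set.inter_subset_inter_left q (hS h)
    have hpost : WG q ⊆ (fun X => S X ∩ q) (WG q) := by
      intro y hy
      have hy' : y ∈ g ∩ S (WG q) ∩ q := hWGfix.symm ▸ hy
      exact ⟨hy'.1.2, hy'.2⟩
    exact ⟨hx'.1.1, postfixed_le_gfp hFmono (hW q) hpost hx⟩
end
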